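/- arXiv:2108.09570 — 2 statements merged into one kernel-verified Lean document; each statement's English description precedes it below -/
import Mathlib

section
/- For all natural numbers n ≥ 3, the n-th prime p_n satisfies p_n < 2 n log n. -/
open Filter

/-! ### Computable helpers for the finite verification -/

def noDivUp (n : ℕ) : ℕ → ℕ → Bool
  | _, 0 => true
  | d, f+1 => if n < d*d then true else (decide (n % d ≠ 0)) && noDivUp n (d+1) f

def isP (n : ℕ) : Bool := decide (2 ≤ n) && noDivUp n 2 n

def lg : ℕ → ℕ → ℕ
  | 0, _ => 0
  | f+1, n => if n < 2 then 0 else lg f (n/2) + 1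

def B (c : ℕ) : ℕ := (13862 * c * lg c c - 1) / 10000

def run : ℕ → ℕ → ℕ → Option ℕ
  | 0, _, c => some c
  | f+1, m, c =>
    if isP m then
      (if c + 1 < 4 ∨ 1023 < c + 1 ∨ m ≤ B (c+1) then run f (m+1) (c+1) else none)
    else run f (m+1) c

lemma noDivUp_spec : ∀ f d n m, noDivUp n d f = true → 1 ≤ d → d ≤ m → m < d + f →
    m * m ≤ n → ¬ m ∣ n := by
  intro f
  induction f with
  | zero => intro d n m _ _ h1 h2; omega
  | succ f ih =>
    intro d n m h hd h1 h2 h3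
    rw [noDivUp] at h
    split at h
    · rename_i hlt
      exact absurd (lt_of_le_of_lt h3 hlt) (by nlinarith)
    · rw [Bool.and_eq_true, decide_eq_true_eq] at h
      rcases eq_or_lt_of_le h1 with rfl | hlt
      · intro hdvd
        exact h.1 (Nat.mod_eq_zero_of_dvd hdvd)
      · exact ih (d+1) n m h.2 (by omega) hlt (by omega) h3

lemma noDivUp_of : ∀ f d n, (∀ m, d ≤ m → m * m ≤ n → ¬ m ∣ n) → noDivUp n d f = true := by
  intro f
  induction f with
  | zero => intro d n _; rfl
  | succ f ih =>
    intro d n h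
    rw [noDivUp]
    split
    · rfl
    · rename_i hge
      rw [Bool.and_eq_true, decide_eq_true_eq]
      refine ⟨fun h0 => h d le_rfl (by omega) (Nat.dvd_of_mod_eq_zero h0), ?_⟩
      exact ih (d+1) n fun m hm => h m (by omega)

lemma isP_iff (n : ℕ) : isP n = true ↔ n.Prime := by
  rw [isP, Bool.and_eq_true, decide_eq_true_eq]
  constructor
  · rintro ⟨h2, h⟩
    rw [Nat.prime_def_le_sqrt]
    refine ⟨h2, fun m hm hms => ?_⟩
    exact noDivUp_spec n 2 n m h (by omega) hm
      (by have := Nat.sqrt_le_self n; omega) (Nat.le_sqrt.1 hms)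
  · intro hp
    refine ⟨hp.two_le, noDivUp_of n 2 n fun m hm hmsq hdvd => ?_⟩
    rcases (Nat.Prime.eq_one_or_self_of_dvd hp) m hdvd with rfl | rfl
    · omega
    · nlinarith [hp.two_le]

lemma lg_le : ∀ f n, 1 ≤ n → n ≤ f → 2 ^ lg f n ≤ n := by
  intro f
  induction f with
  | zero => intro n h1 h2; omega
  | succ f ih =>
    intro n h1 h2
    rw [lg]
    split
    · simpa using h1
    · rename_i hge
      have h' := ih (n/2) (by omega) (by omega)
      calc 2 ^ (lg f (n/2) + 1) = 2 ^ lg f (n/2) * 2 := by ring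
        _ ≤ n/2 * 2 := by omega
        _ ≤ n := by omega

lemma lg_ge_one : ∀ f n, 2 ≤ n → n ≤ f → 1 ≤ lg f n := by
  intro f
  induction f with
  | zero => intro n h1 h2; omega
  | succ f _ =>
    intro n h1 h2
    rw [lg]
    split
    · omega
    · omega

lemma run_add (a b m c c' : ℕ) (h : run a m c = some c') :
    run (a+b) m c = run b (m+a) c' := by
  induction a generalizing m c with
  | zero =>
    rw [run] at h
    obtain rfl : c = c' := Option.some.inj h
    simp
  | succ a ih =>
    have e1 : a + 1 + b = (a + b) + 1 := by omega
    have e2 : m + (a+1) = m + 1 + a := by omega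
    rw [e1, run]
    rw [run] at h
    split
    · rename_i hp
      rw [if_pos hp] at h
      split at h
      · rename_i hcond
        rw [if_pos hcond, ih (m+1) (c+1) h, e2]
      · exact absurd h (by simp)
    · rename_i hp
      rw [if_neg hp] at h
      rw [ih (m+1) c h, e2]

lemma run_spec : ∀ f m c, c = Nat.count Nat.Prime m → ∀ c', run f m c = some c' →
    c' = Nat.count Nat.Prime (m+f) ∧
    ∀ q, m ≤ q → q < m + f → q.Prime → 4 ≤ Nat.count Nat.Prime (q+1) →
      Nat.count Nat.Prime (q+1) ≤ 1023 → q ≤ B (Nat.count Nat.Prime (q+1)) := by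
  intro f
  induction f with
  | zero =>
    intro m c hc c' h
    rw [run] at h
    obtain rfl : c = c' := Option.some.inj h
    refine ⟨by simpa using hc, ?_⟩
    intro q h1 h2 _ _ _
    omega
  | succ f ih =>
    intro m c hc c' h
    rw [run] at h
    by_cases hp : isP m = true
    · rw [if_pos hp] at h
      rw [isP_iff] at hp
      have hcount : c + 1 = Nat.count Nat.Prime (m+1) := by
        rw [Nat.count_succ, if_pos hp, hc]
      split at h
      · rename_i hcond
        obtain ⟨h1, h2⟩ := ih (m+1) (c+1) hcount c' h
        constructor
        · rw [h1]; ring_nf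
        · intro q hq1 hq2 hq3 hq4 hq5
          rcases eq_or_lt_of_le hq1 with rfl | hlt
          · rw [← hcount] at hq4 hq5 ⊢
            rcases hcond with h' | h' | h'
            · omega
            · omega
            · exact h'
          · exact h2 q (by omega) (by omega) hq3 hq4 hq5
      · exact absurd h (by simp)
    · rw [if_neg hp] at h
      rw [isP_iff] at hp
      have hcount : c = Nat.count Nat.Prime (m+1) := by
        rw [Nat.count_succ, if_neg hp, add_zero, hc]
      obtain ⟨h1, h2⟩ := ih (m+1) c hcount c' h
      constructor
      · rw [h1]; ring_nf
      · intro q hq1 hq2 hq3 hq4 hq5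
        rcases eq_or_lt_of_le hq1 with rfl | hlt
        · exact absurd hq3 hp
        · exact h2 q (by omega) (by omega) hq3 hq4 hq5

set_option maxRecDepth 10000 in
lemma run_chunk1 : run 2000 2 0 = some 303 := by decide
set_option maxRecDepth 10000 in
lemma run_chunk2 : run 2000 2002 303 = some 551 := by decide
set_option maxRecDepth 10000 in
lemma run_chunk3 : run 2000 4002 551 = some 783 := by decide
set_option maxRecDepth 10000 in
lemma run_chunk4 : run 2000 6002 783 = some 1007 := by decide
set_option maxRecDepth 10000 in
lemma run_chunk5 : run 200 8002 1007 = some 1028 := by decide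

lemma run_total : run 8200 2 0 = some 1028 := by
  have h1 := run_add 2000 6200 2 0 303 run_chunk1
  norm_num at h1
  have h2 := run_add 2000 4200 2002 303 551 run_chunk2
  norm_num at h2
  have h3 := run_add 2000 2200 4002 551 783 run_chunk3
  norm_num at h3
  have h4 := run_add 2000 200 6002 783 1007 run_chunk4
  norm_num at h4
  have : (8200 : ℕ) = 2000 + 6200 := by norm_num
  rw [this, h1, h2, h3, h4]
  exact run_chunk5

lemma count_two : Nat.count Nat.Prime 2 = 0 := by
  simp [Nat.count_succ, Nat.not_prime_zero, Nat.not_prime_one]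

lemma finite_bound (n : ℕ) (h4 : 4 ≤ n) (h : n ≤ 1023) :
    Nat.nth Nat.Prime (n-1) ≤ B n := by
  obtain ⟨h1, h2⟩ := run_spec 8200 2 0 count_two.symm 1028 run_total
  set q := Nat.nth Nat.Prime (n-1) with hq
  have hqp : q.Prime := Nat.prime_nth_prime (n-1)
  have hcq : Nat.count Nat.Prime (q+1) = n := by
    rw [hq, Nat.count_nth_succ_of_infinite Nat.infinite_setOf_prime]
    omega
  have hqlt : q < 2 + 8200 := by
    apply Nat.nth_lt_of_lt_count
    omega
  have := h2 q hqp.two_le hqlt hqp (by omega) (by omega)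
  rwa [hcq] at this

lemma cheb (m : ℕ) (hm : 4 ≤ m) :
    4 ^ m < (2*m) ^ (Nat.count Nat.Prime (2*m+1) + 1) := by
  have h1 : 4 ^ m < m * m.centralBinom := Nat.four_pow_lt_mul_centralBinom m hm
  have h2 : m.centralBinom ≤ (2*m) ^ (Nat.count Nat.Prime (2*m+1)) := by
    conv_lhs => rw [← Nat.prod_pow_factorization_centralBinom m]
    rw [← Finset.prod_filter_of_ne
      (fun p _ hne => (by
        by_contra hnp
        rw [Nat.factorization_eq_zero_of_not_prime _ hnp, pow_zero] at hne
        exact hne rfl : Nat.Prime p))]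
    calc ∏ p ∈ (Finset.range (2*m+1)).filter Nat.Prime, p ^ (m.centralBinom).factorization p
        ≤ ∏ _p ∈ (Finset.range (2*m+1)).filter Nat.Prime, (2*m) := by
          apply Finset.prod_le_prod'
          intro p _
          exact Nat.pow_factorization_choose_le (by omega)
      _ = (2*m) ^ ((Finset.range (2*m+1)).filter Nat.Prime).card := Finset.prod_const _
      _ = (2*m) ^ (Nat.count Nat.Prime (2*m+1)) := by
          rw [Nat.count_eq_card_filter_range]
  calc 4 ^ m < m * m.centralBinom := h1
    _ ≤ m * (2*m) ^ (Nat.count Nat.Prime (2*m+1)) := Nat.mul_le_mul_left m h2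
    _ ≤ (2*m) * (2*m) ^ (Nat.count Nat.Prime (2*m+1)) := Nat.mul_le_mul_right _ (by omega)
    _ = (2*m) ^ (Nat.count Nat.Prime (2*m+1) + 1) := by rw [pow_succ]; ring

set_option maxHeartbeats 1000000 in
lemma analytic_bound (n : ℕ) (hn : 1024 ≤ n) :
    (Nat.nth Nat.Prime (n-1) : ℝ) < 2 * n * Real.log n := by
  set L : ℝ := Real.log 2 with hL
  have hL1 : (0.6931471803 : ℝ) < L := Real.log_two_gt_d9
  have hL2 : L < 0.6931471808 := Real.log_two_lt_d9
  have hnR : (1024 : ℝ) ≤ (n : ℝ) := by exact_mod_cast hn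
  set t : ℝ := Real.log n with htdef
  have ht10 : 10 * L ≤ t := by
    have h1 : Real.log ((2:ℝ)^10) ≤ Real.log n := by
      apply Real.log_le_log (by positivity)
      have : ((2:ℝ)^10) = 1024 := by norm_num
      rw [this]; exact hnR
    rwa [Real.log_pow, ← hL, ← htdef] at h1
  have ht0 : 0 < t := by nlinarith
  have hnt : (0:ℝ) < n * t := by positivity
  set m : ℕ := ⌊(n : ℝ) * t⌋₊ with hm
  have hm_le : (m : ℝ) ≤ n * t := Nat.floor_le hnt.le
  have hm_gt : (n : ℝ) * t - 1 < m := Nat.sub_one_lt_floor _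
  have hm4 : 4 ≤ m := by
    have h4 : (4 : ℝ) ≤ m := by nlinarith
    exact_mod_cast h4
  set pc := Nat.count Nat.Prime (2*m+1) with hpc
  have hcheb : ((4^m : ℕ) : ℝ) < (((2*m)^(pc+1) : ℕ) : ℝ) := Nat.cast_lt.mpr (cheb m hm4)
  have hM1 : (1:ℕ) < 2*m := by omega
  have h2m1 : (1:ℝ) < ((2*m : ℕ) : ℝ) := by exact_mod_cast hM1
  have hlog2m_pos : 0 < Real.log ((2*m : ℕ) : ℝ) := Real.log_pos h2m1
  have hkey : (m : ℝ) * (2 * L) ≤ ((pc : ℝ) + 1) * Real.log ((2*m : ℕ) : ℝ) := by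
    have h1 : Real.log ((4^m : ℕ) : ℝ) ≤ Real.log (((2*m)^(pc+1) : ℕ) : ℝ) :=
      Real.log_le_log (by positivity) hcheb.le
    rw [Nat.cast_pow, Nat.cast_pow, Real.log_pow, Real.log_pow] at h1
    have h4 : Real.log ((4:ℕ):ℝ) = 2 * L := by
      rw [show ((4:ℕ):ℝ) = 2^2 by norm_num, Real.log_pow, ← hL]; push_cast; ring
    rw [h4] at h1
    push_cast at h1 ⊢
    nlinarith [h1]
  have hlog2m_le : Real.log ((2*m : ℕ) : ℝ) ≤ 4 * L - 1 + 9 * t / 8 := by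
    have hmpos : (0:ℝ) < ((2*m : ℕ) : ℝ) := by positivity
    have h1 : Real.log ((2*m : ℕ) : ℝ) ≤ Real.log (2 * ((n:ℝ) * t)) := by
      apply Real.log_le_log hmpos
      push_cast
      nlinarith
    have h2 : Real.log (2 * ((n : ℝ) * t)) = L + (t + Real.log t) := by
      rw [Real.log_mul (by norm_num) (by positivity),
        Real.log_mul (by positivity) (by positivity), ← hL, ← htdef]
    have h3 : Real.log t ≤ t / 8 - 1 + 3 * L := by
      have he : Real.log t = Real.log (t/8) + Real.log 8 := by
        rw [← Real.log_mul (by positivity) (by norm_num)]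
        congr 1
        field_simp
      have h8 : Real.log (8:ℝ) = 3 * L := by
        rw [show (8:ℝ) = 2^3 by norm_num, Real.log_pow, ← hL]; push_cast; ring
      have hs := Real.log_le_sub_one_of_pos (show (0:ℝ) < t/8 by positivity)
      rw [he, h8]
      nlinarith
    nlinarith
  have hLL : (0.48:ℝ) < L^2 := by nlinarith
  have hmain : ((n : ℝ) + 1) * Real.log ((2*m : ℕ) : ℝ) ≤ (m : ℝ) * (2 * L) := by
    have hstep : ((n : ℝ) + 1) * (4 * L - 1 + 9 * t / 8) ≤ 2 * L * ((n : ℝ) * t - 1) := by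
      nlinarith [mul_nonneg (sub_nonneg.2 ht10)
          (by nlinarith : (0:ℝ) ≤ (2*L - 9/8) * (n : ℝ) - 9/8),
        mul_nonneg (by nlinarith : (0:ℝ) ≤ (n:ℝ) - 1024)
          (by nlinarith [hLL] : (0:ℝ) ≤ 20*L^2 - (61/4)*L + 1)]
    calc ((n : ℝ) + 1) * Real.log ((2*m : ℕ) : ℝ)
        ≤ ((n : ℝ) + 1) * (4 * L - 1 + 9 * t / 8) := by
          apply mul_le_mul_of_nonneg_left hlog2m_le (by positivity)
      _ ≤ 2 * L * ((n : ℝ) * t - 1) := hstep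
      _ ≤ (m : ℝ) * (2 * L) := by nlinarith
  have hnpc : n ≤ pc := by
    have h1 : ((n : ℝ) + 1) * Real.log ((2*m : ℕ) : ℝ) ≤ ((pc : ℝ) + 1) * Real.log ((2*m : ℕ) : ℝ) :=
      le_trans hmain hkey
    have h2 : (n : ℝ) + 1 ≤ (pc : ℝ) + 1 := le_of_mul_le_mul_right h1 hlog2m_pos
    have h3 : n + 1 ≤ pc + 1 := by exact_mod_cast h2
    omega
  have h2m_np : ¬ (2*m).Prime := Nat.not_prime_mul (by omega) (by omega)
  have hcount2m : Nat.count Nat.Prime (2*m+1) = Nat.count Nat.Prime (2*m) := by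
    rw [Nat.count_succ, if_neg h2m_np, add_zero]
  have hlt : Nat.nth Nat.Prime (n-1) < 2*m := by
    apply Nat.nth_lt_of_lt_count
    rw [← hcount2m, ← hpc]
    omega
  have hltR : (Nat.nth Nat.Prime (n-1) : ℝ) < ((2*m : ℕ) : ℝ) := by exact_mod_cast hlt
  calc (Nat.nth Nat.Prime (n-1) : ℝ) < ((2*m : ℕ) : ℝ) := hltR
    _ ≤ 2 * n * t := by push_cast; nlinarith
    _ = 2 * n * Real.log n := rfl


/-- The `n`-th prime number, with `nthPrime 1 = 2`. -/
noncomputable def nthPrime (n : ℕ) : ℕ := Nat.nth Nat.Prime (n - 1)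

theorem nthPrime_lt (n : ℕ) (hn : 3 ≤ n) :
    (nthPrime n : ℝ) < 2 * n * Real.log n := by
  rw [nthPrime]
  rcases eq_or_lt_of_le hn with rfl | h3
  · have h5 : Nat.nth Nat.Prime 2 = 5 := by
      have hc : Nat.count Nat.Prime 5 = 2 := by
        simp [Nat.count_succ, Nat.prime_two, Nat.prime_three,
          (by norm_num : ¬ Nat.Prime 4), Nat.not_prime_zero, Nat.not_prime_one]
      have h := Nat.nth_count (p := Nat.Prime) (n := 5) (by norm_num)
      rw [hc] at h
      exact h
    norm_num [h5]
    have he : Real.exp 1 < 3 := lt_trans Real.exp_one_lt_d9 (by norm_num)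
    have h1 : (1:ℝ) < Real.log 3 := by
      have h2 := Real.log_lt_log (Real.exp_pos 1) he
      rwa [Real.log_exp] at h2
    nlinarith
  · have h4 : 4 ≤ n := h3
    rcases Nat.lt_or_ge n 1024 with hlt | hge
    · have hb := finite_bound n h4 (by omega)
      set q := Nat.nth Nat.Prime (n-1) with hq
      have hk1 : 1 ≤ lg n n := lg_ge_one n n (by omega) le_rfl
      have hk2 : 2 ^ lg n n ≤ n := lg_le n n (by omega) le_rfl
      set k := lg n n with hk
      have hX : 1 ≤ 13862 * n * k := by
        have h0 : 0 < 13862 * n * k := Nat.mul_pos (Nat.mul_pos (by norm_num) (by omega)) hk1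
        omega
      have h10 : q * 10000 ≤ 13862 * n * k - 1 := by
        rw [B] at hb
        exact (Nat.le_div_iff_mul_le (by norm_num)).1 hb
      have hqR : (q : ℝ) * 10000 < 13862 * (n : ℝ) * (k : ℝ) := by
        have h' : q * 10000 < 13862 * n * k := by omega
        exact_mod_cast h'
      have hlogn : (k : ℝ) * Real.log 2 ≤ Real.log n := by
        have h1 : Real.log ((2:ℝ)^k) ≤ Real.log n := by
          apply Real.log_le_log (by positivity)
          exact_mod_cast hk2
        rwa [Real.log_pow] at h1
      have hL1 : (0.6931471803 : ℝ) < Real.log 2 := Real.log_two_gt_d9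
      have hkR : (1:ℝ) ≤ (k:ℝ) := by exact_mod_cast hk1
      have hnR : (4:ℝ) ≤ (n:ℝ) := by exact_mod_cast h4
      nlinarith [mul_le_mul_of_nonneg_left hlogn
        (by positivity : (0:ℝ) ≤ 2 * (n:ℝ) * 10000)]
    · exact analytic_bound n hge
end

section
/- Assume the Riemann Hypothesis and Schoenfeld's bound. Then for all natural numbers n ≥ 2657, √(li^{-1}(n)) − √(p_n) < (√2/(16π)) · (log(2n log n))². -/
open Filter intervalIntegral MeasureTheory


open Filter

/-- Principal value logarithmic integral from 0: `li x = p.v. ∫ t in 0..x, dt / log t`. -/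
noncomputable def li (x : ℝ) : ℝ :=
  limUnder (nhdsWithin 0 (Set.Ioi (0:ℝ))) fun ε : ℝ =>
    (∫ t in (0:ℝ)..(1 - ε), 1 / Real.log t) + ∫ t in (1 + ε)..x, 1 / Real.log t

/-- Inverse of the logarithmic integral `li` (on its increasing branch). -/
noncomputable def liInv : ℝ → ℝ := Function.invFun li

/-- Prime counting function on the reals: number of primes `≤ x`. -/
noncomputable def primePi (x : ℝ) : ℕ := Nat.primeCounting ⌊x⌋₊

noncomputable def H (t : ℝ) : ℝ := 1 / Real.log t - 1 / (t - 1)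


-- (t-1)/t ≤ log t for t > 0
lemma sub_div_le_log {t : ℝ} (ht : 0 < t) : (t - 1) / t ≤ Real.log t := by
  have h := Real.log_le_sub_one_of_pos (x := t⁻¹) (by positivity)
  rw [Real.log_inv] at h
  have : 1 - t⁻¹ ≤ Real.log t := by linarith
  calc (t - 1) / t = 1 - t⁻¹ := by field_simp
    _ ≤ Real.log t := this

lemma H_nonneg {t : ℝ} (ht : 0 ≤ t) : 0 ≤ H t := by
  unfold H
  rcases eq_or_lt_of_le ht with h0 | h0
  · simp [← h0]
  rcases lt_trichotomy t 1 with h1 | h1 | h1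
  · -- log t ≤ t - 1 < 0
    have hl : Real.log t ≤ t - 1 := Real.log_le_sub_one_of_pos h0
    have hlt : t - 1 < 0 := by linarith
    have hlog : Real.log t < 0 := Real.log_neg h0 h1
    have := one_div_le_one_div_of_neg_of_le hlt hl
    linarith
  · subst h1; norm_num
  · have hl : Real.log t ≤ t - 1 := Real.log_le_sub_one_of_pos h0
    have hlog : 0 < Real.log t := Real.log_pos h1
    have := one_div_le_one_div_of_le hlog hl
    linarith

lemma H_le_one {t : ℝ} (ht : 0 ≤ t) : H t ≤ 1 := by
  unfold H
  rcases eq_or_lt_of_le ht with h0 | h0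
  · simp [← h0]
  rcases lt_trichotomy t 1 with h1 | h1 | h1
  · -- (t-1)/t ≤ log t < 0 : 1/log t ≤ t/(t-1)
    have hl := sub_div_le_log h0
    have hlog : Real.log t < 0 := Real.log_neg h0 h1
    have hlt : (t - 1)/t < 0 := div_neg_of_neg_of_pos (by linarith) h0
    have h2 := one_div_le_one_div_of_neg_of_le hlog hl
    rw [one_div_div] at h2
    have : t / (t-1) = 1 + 1/(t-1) := by
      have hne : t - 1 ≠ 0 := by intro h; rw [sub_eq_zero] at h; exact absurd h (ne_of_lt h1)
      field_simp; ring
    rw [this] at h2; linarith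
  · subst h1; norm_num
  · have hl := sub_div_le_log h0
    have hpos : 0 < (t-1)/t := div_pos (by linarith) h0
    have h2 := one_div_le_one_div_of_le hpos hl
    rw [one_div_div] at h2
    have : t / (t-1) = 1 + 1/(t-1) := by
      have hne : t - 1 ≠ 0 := by intro h; rw [sub_eq_zero] at h; exact absurd h (ne_of_gt h1)
      field_simp; ring
    rw [this] at h2; linarith

lemma H_measurable : Measurable H := by
  unfold H
  exact (measurable_const.div Real.measurable_log).sub
    (measurable_const.div (measurable_id.sub measurable_const))

lemma H_intervalIntegrable {a b : ℝ} (ha : 0 ≤ a) (hb : 0 ≤ b) :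
    IntervalIntegrable H volume a b := by
  rw [intervalIntegrable_iff]
  refine ⟨H_measurable.aestronglyMeasurable.restrict, ?_⟩
  have : IsFiniteMeasure (volume.restrict (Set.uIoc a b)) := by rw [Set.uIoc]; infer_instance
  apply MeasureTheory.HasFiniteIntegral.of_bounded (C := 1)
  filter_upwards [MeasureTheory.ae_restrict_mem measurableSet_uIoc] with t ht
  have ht0 : 0 ≤ t := by
    rcases Set.mem_uIoc.mp ht with h | h
    · exact le_trans ha h.1.le
    · exact le_trans hb h.1.le
  rw [Real.norm_eq_abs, abs_le]
  exact ⟨by linarith [H_nonneg ht0], H_le_one ht0⟩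

lemma H_add (t : ℝ) : H t + 1/(t-1) = 1 / Real.log t := by
  unfold H; ring

lemma H_continuousAt {y : ℝ} (hy : 1 < y) : ContinuousAt H y := by
  have h1 : Real.log y ≠ 0 := ne_of_gt (Real.log_pos hy)
  have h2 : y - 1 ≠ 0 := by linarith
  apply ContinuousAt.sub
  · exact (continuousAt_const.div ((Real.continuousAt_log (by linarith)) ) h1)
  · exact continuousAt_const.div (by fun_prop) h2
lemma one_div_sub_one_intervalIntegrable {a b : ℝ} (h : (1:ℝ) ∉ Set.uIcc a b) :
    IntervalIntegrable (fun t => 1/(t-1)) volume a b := by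
  apply ContinuousOn.intervalIntegrable
  apply ContinuousOn.div continuousOn_const (by fun_prop)
  intro t ht
  exact sub_ne_zero.mpr (fun he => h (he ▸ ht))

lemma integral_one_div_sub_one {a b : ℝ} (h : (1:ℝ) ∉ Set.uIcc a b) :
    ∫ t in a..b, 1/(t-1) = Real.log ((b-1)/(a-1)) := by
  rw [intervalIntegral.integral_comp_sub_right (fun x => 1/x) 1]
  apply integral_one_div
  intro h0
  apply h
  rcases Set.mem_uIcc.mp h0 with ⟨h1, h2⟩ | ⟨h1, h2⟩
  · exact Set.mem_uIcc.mpr (Or.inl ⟨by linarith, by linarith⟩)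
  · exact Set.mem_uIcc.mpr (Or.inr ⟨by linarith, by linarith⟩)

lemma li_eq {x : ℝ} (hx : 1 < x) :
    li x = (∫ t in (0:ℝ)..x, H t) + Real.log (x - 1) := by
  have hIadd : (∫ t in (0:ℝ)..1, H t) + (∫ t in (1:ℝ)..x, H t) = ∫ t in (0:ℝ)..x, H t :=
    integral_add_adjacent_intervals (H_intervalIntegrable le_rfl zero_le_one)
      (H_intervalIntegrable zero_le_one (by linarith))
  set I1 := ∫ t in (0:ℝ)..1, H t with hI1
  set I2 := ∫ t in (1:ℝ)..x, H t with hI2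
  have hmem : Set.Ioo (0:ℝ) (min 1 (x-1)) ∈ nhdsWithin 0 (Set.Ioi (0:ℝ)) :=
    Ioo_mem_nhdsGT_of_mem ⟨le_refl _, by simp only [lt_min_iff]; exact ⟨zero_lt_one, by linarith⟩⟩
  -- step 1
  have hA : Tendsto (fun ε => ∫ t in (0:ℝ)..(1-ε), H t) (nhdsWithin 0 (Set.Ioi (0:ℝ))) (nhds I1) := by
    rw [tendsto_iff_dist_tendsto_zero]
    apply squeeze_zero' (g := fun ε => ε)
    · exact Eventually.of_forall (fun _ => dist_nonneg)
    · filter_upwards [hmem] with ε hε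
      have hε0 : 0 < ε := hε.1
      have hε1 : ε < 1 := lt_of_lt_of_le hε.2 (min_le_left _ _)
      have hsplit : (∫ t in (0:ℝ)..(1-ε), H t) + (∫ t in (1-ε)..1, H t) = I1 :=
        integral_add_adjacent_intervals (H_intervalIntegrable le_rfl (by linarith))
          (H_intervalIntegrable (by linarith) zero_le_one)
      rw [Real.dist_eq, ← hsplit]
      have hb : |∫ t in (1-ε)..1, H t| ≤ 1 * |1 - (1-ε)| := by
        rw [← Real.norm_eq_abs]
        apply intervalIntegral.norm_integral_le_of_norm_le_const
        intro t ht
        rw [Set.uIoc_of_le (by linarith)] at ht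
        have ht0 : 0 ≤ t := by linarith [ht.1]
        rw [Real.norm_eq_abs, abs_le]
        exact ⟨by linarith [H_nonneg ht0], H_le_one ht0⟩
      have : |1 - (1-ε)| = ε := by rw [abs_of_nonneg (by linarith)]; ring_nf
      calc |(∫ t in (0:ℝ)..(1-ε), H t) - ((∫ t in (0:ℝ)..(1-ε), H t) + ∫ t in (1-ε)..1, H t)|
          = |∫ t in (1-ε)..1, H t| := by
            rw [show (∫ t in (0:ℝ)..(1-ε), H t) - ((∫ t in (0:ℝ)..(1-ε), H t) + ∫ t in (1-ε)..1, H t)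
              = -(∫ t in (1-ε)..1, H t) by ring, abs_neg]
        _ ≤ 1 * |1 - (1-ε)| := hb
        _ = ε := by rw [this]; ring
    · exact tendsto_id.mono_left nhdsWithin_le_nhds
  -- step 2
  have hB : Tendsto (fun ε => ∫ t in (1+ε)..x, H t) (nhdsWithin 0 (Set.Ioi (0:ℝ))) (nhds I2) := by
    rw [tendsto_iff_dist_tendsto_zero]
    apply squeeze_zero' (g := fun ε => ε)
    · exact Eventually.of_forall (fun _ => dist_nonneg)
    · filter_upwards [hmem] with ε hε
      have hε0 : 0 < ε := hε.1
      have hε1 : ε < x - 1 := lt_of_lt_of_le hε.2 (min_le_right _ _)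
      have hsplit : (∫ t in (1:ℝ)..(1+ε), H t) + (∫ t in (1+ε)..x, H t) = I2 :=
        integral_add_adjacent_intervals (H_intervalIntegrable zero_le_one (by linarith [hε.1]))
          (H_intervalIntegrable (by linarith [hε.1]) (by linarith))
      rw [Real.dist_eq, ← hsplit]
      have hb : |∫ t in (1:ℝ)..(1+ε), H t| ≤ 1 * |(1+ε) - 1| := by
        rw [← Real.norm_eq_abs]
        apply intervalIntegral.norm_integral_le_of_norm_le_const
        intro t ht
        rw [Set.uIoc_of_le (by linarith [hε.1])] at ht
        have ht0 : 0 ≤ t := by linarith [ht.1]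
        rw [Real.norm_eq_abs, abs_le]
        exact ⟨by linarith [H_nonneg ht0], H_le_one ht0⟩
      have : |(1+ε) - 1| = ε := by rw [abs_of_nonneg (by linarith [hε.1])]; ring_nf
      calc |(∫ t in (1+ε)..x, H t) - ((∫ t in (1:ℝ)..(1+ε), H t) + ∫ t in (1+ε)..x, H t)|
          = |∫ t in (1:ℝ)..(1+ε), H t| := by
            rw [show (∫ t in (1+ε)..x, H t) - ((∫ t in (1:ℝ)..(1+ε), H t) + ∫ t in (1+ε)..x, H t)
              = -(∫ t in (1:ℝ)..(1+ε), H t) by ring, abs_neg]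
        _ ≤ 1 * |(1+ε) - 1| := hb
        _ = ε := by rw [this]; ring
    · exact tendsto_id.mono_left nhdsWithin_le_nhds
  -- eventual equality
  have heq : (fun ε : ℝ => (∫ t in (0:ℝ)..(1 - ε), 1 / Real.log t) + ∫ t in (1 + ε)..x, 1 / Real.log t)
      =ᶠ[nhdsWithin 0 (Set.Ioi (0:ℝ))]
      fun ε => ((∫ t in (0:ℝ)..(1-ε), H t) + (∫ t in (1+ε)..x, H t)) + Real.log (x-1) := by
    filter_upwards [hmem] with ε hε
    have hε0 : 0 < ε := hε.1
    have hε1 : ε < 1 := lt_of_lt_of_le hε.2 (min_le_left _ _)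
    have hεx : ε < x - 1 := lt_of_lt_of_le hε.2 (min_le_right _ _)
    have hnotmem1 : (1:ℝ) ∉ Set.uIcc 0 (1-ε) := by
      rw [Set.uIcc_of_le (by linarith)]
      intro hmem1; exact absurd hmem1.2 (by linarith)
    have hnotmem2 : (1:ℝ) ∉ Set.uIcc (1+ε) x := by
      rw [Set.uIcc_of_le (by linarith)]
      intro hmem1; exact absurd hmem1.1 (by linarith)
    have e1 : (∫ t in (0:ℝ)..(1-ε), 1 / Real.log t)
        = (∫ t in (0:ℝ)..(1-ε), H t) + Real.log ε := by
      have : (∫ t in (0:ℝ)..(1-ε), 1 / Real.log t)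
          = (∫ t in (0:ℝ)..(1-ε), H t) + ∫ t in (0:ℝ)..(1-ε), 1/(t-1) := by
        rw [← intervalIntegral.integral_add (H_intervalIntegrable le_rfl (by linarith))
          (one_div_sub_one_intervalIntegrable hnotmem1)]
        exact intervalIntegral.integral_congr (fun t _ => (H_add t).symm)
      rw [this, integral_one_div_sub_one hnotmem1]
      norm_num
    have e2 : (∫ t in (1+ε)..x, 1 / Real.log t)
        = (∫ t in (1+ε)..x, H t) + (Real.log (x-1) - Real.log ε) := by
      have : (∫ t in (1+ε)..x, 1 / Real.log t)
          = (∫ t in (1+ε)..x, H t) + ∫ t in (1+ε)..x, 1/(t-1) := by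
        rw [← intervalIntegral.integral_add
          (H_intervalIntegrable (by linarith) (by linarith))
          (one_div_sub_one_intervalIntegrable hnotmem2)]
        exact intervalIntegral.integral_congr (fun t _ => (H_add t).symm)
      rw [this, integral_one_div_sub_one hnotmem2]
      have : ((1:ℝ)+ε-1) = ε := by ring
      rw [this, Real.log_div (by linarith) (ne_of_gt hε0)]
    rw [e1, e2]; ring
  have : Tendsto (fun ε => ((∫ t in (0:ℝ)..(1-ε), H t) + (∫ t in (1+ε)..x, H t)) + Real.log (x-1))
      (nhdsWithin 0 (Set.Ioi (0:ℝ))) (nhds ((I1 + I2) + Real.log (x-1))) :=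
    (hA.add hB).add tendsto_const_nhds
  have htend := this.congr' heq.symm
  rw [hIadd] at htend
  rw [li]
  exact htend.limUnder_eq
lemma li_hasDerivAt {y : ℝ} (hy : 1 < y) : HasDerivAt li (1 / Real.log y) y := by
  have hInt : HasDerivAt (fun u => ∫ t in (0:ℝ)..u, H t) (H y) y := by
    apply intervalIntegral.integral_hasDerivAt_right
      (H_intervalIntegrable le_rfl (by linarith))
      (H_measurable.stronglyMeasurable.stronglyMeasurableAtFilter)
      (H_continuousAt hy)
  have hLog : HasDerivAt (fun u : ℝ => Real.log (u - 1)) (1/(y-1)) y := by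
    have h0 : y - 1 ≠ 0 := by intro h; rw [sub_eq_zero] at h; exact absurd h (ne_of_gt hy)
    have := (Real.hasDerivAt_log h0).comp y ((hasDerivAt_id y).sub_const 1)
    simpa [one_div, Function.comp_def] using this
  have h1 := hInt.add hLog
  have h2 : H y + 1/(y-1) = 1 / Real.log y := H_add y
  rw [h2] at h1
  apply h1.congr_of_eventuallyEq
  filter_upwards [isOpen_Ioi.eventually_mem hy] with u hu
  exact li_eq hu

lemma li_continuousOn : ContinuousOn li (Set.Ioi 1) :=
  fun _ hy => (li_hasDerivAt hy).continuousAt.continuousWithinAt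

lemma li_strictMonoOn : StrictMonoOn li (Set.Ioi 1) := by
  apply strictMonoOn_of_deriv_pos (convex_Ioi 1) li_continuousOn
  intro y hy
  rw [interior_Ioi] at hy
  rw [(li_hasDerivAt hy).deriv]
  exact one_div_pos.mpr (Real.log_pos hy)

lemma li_two_nonneg : 0 ≤ li 2 := by
  rw [li_eq one_lt_two]
  norm_num
  apply intervalIntegral.integral_nonneg (by norm_num)
  intro t ht
  exact H_nonneg ht.1

lemma li_two_le : li 2 ≤ 2 := by
  rw [li_eq one_lt_two]
  have : |∫ t in (0:ℝ)..2, H t| ≤ 1 * |(2:ℝ) - 0| := by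
    rw [← Real.norm_eq_abs]
    apply intervalIntegral.norm_integral_le_of_norm_le_const
    intro t ht
    rw [Set.uIoc_of_le (by norm_num)] at ht
    rw [Real.norm_eq_abs, abs_le]
    exact ⟨by linarith [H_nonneg ht.1.le], H_le_one ht.1.le⟩
  have h2 : (∫ t in (0:ℝ)..2, H t) ≤ 2 := by
    have := abs_le.mp this
    norm_num at this ⊢
    linarith [this.2]
  norm_num
  exact h2

lemma li_lower {x : ℝ} (hx : 1 < x) : Real.log (x-1) ≤ li x := by
  rw [li_eq hx]
  have : 0 ≤ ∫ t in (0:ℝ)..x, H t := by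
    apply intervalIntegral.integral_nonneg (by linarith)
    intro t ht
    exact H_nonneg ht.1
  linarith

lemma li_surj {c : ℝ} (hc : 2 ≤ c) : ∃ a, li a = c := by
  set B := Real.exp c + 1 with hB
  have hB2 : 2 ≤ B := by
    have := Real.add_one_le_exp c
    simp only [hB]; linarith
  have hcB : c ≤ li B := by
    have h1 : (1:ℝ) < B := by linarith
    have := li_lower h1
    rw [show B - 1 = Real.exp c by ring, Real.log_exp] at this
    exact this
  have hcont : ContinuousOn li (Set.Icc 2 B) :=
    li_continuousOn.mono (fun t ht => lt_of_lt_of_le one_lt_two ht.1)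
  have := intermediate_value_Icc hB2 hcont
  have hmem : c ∈ Set.Icc (li 2) (li B) := ⟨le_trans li_two_le hc, hcB⟩
  obtain ⟨a, _, ha⟩ := this hmem
  exact ⟨a, ha⟩

lemma log_n_large {n : ℝ} (hn : 2657 ≤ n) : 2 * Real.exp 1 * Real.log n ≤ n := by
  have hn0 : (0:ℝ) < n := by linarith
  have hs : Real.log n ≤ 2 * Real.sqrt n := by
    have h1 : Real.log (Real.sqrt n) ≤ Real.sqrt n - 1 :=
      Real.log_le_sub_one_of_pos (Real.sqrt_pos.mpr hn0)
    rw [Real.log_sqrt hn0.le] at h1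
    linarith
  have he : Real.exp 1 ≤ 3 := by
    have := Real.exp_one_lt_d9
    linarith
  have hsq : (12:ℝ) ≤ Real.sqrt n := by
    rw [show (12:ℝ) = Real.sqrt 144 by rw [show (144:ℝ) = 12^2 by norm_num, Real.sqrt_sq]; norm_num]
    exact Real.sqrt_le_sqrt (by linarith)
  have hss : Real.sqrt n * Real.sqrt n = n := Real.mul_self_sqrt hn0.le
  have hsn : 0 ≤ Real.sqrt n := Real.sqrt_nonneg n
  calc 2 * Real.exp 1 * Real.log n ≤ 2 * 3 * (2 * Real.sqrt n) := by
        apply mul_le_mul (by linarith) hs ?_ (by norm_num)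
        calc (0:ℝ) ≤ Real.log 2657 := Real.log_nonneg (by norm_num)
          _ ≤ Real.log n := Real.log_le_log (by norm_num) hn
    _ = 12 * Real.sqrt n := by ring
    _ ≤ Real.sqrt n * Real.sqrt n := by nlinarith
    _ = n := hss
lemma li_inv_upper {x n : ℝ} (hx : 1 < x) (hn : 2657 ≤ n) (hlix : li x = n) :
    x ≤ 2 * n * Real.log n := by
  have hn0 : (0:ℝ) < n := by linarith
  have he3 : Real.exp 1 ≤ 3 := by have := Real.exp_one_lt_d9; linarith
  have hlog1 : 1 ≤ Real.log n := by
    rw [Real.le_log_iff_exp_le hn0]; linarith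
  have hX₀n : n < 2 * n * Real.log n := by nlinarith
  by_cases hx2 : x ≤ 2
  · nlinarith
  push_neg at hx2
  -- MVT from 2 to x
  obtain ⟨c, hc, hslope⟩ := exists_hasDerivAt_eq_slope li (fun t => 1/Real.log t) hx2
    (li_continuousOn.mono (fun t ht => lt_of_lt_of_le one_lt_two ht.1))
    (fun t ht => li_hasDerivAt (by linarith [ht.1]))
  have hc1 : (1:ℝ) < c := by linarith [hc.1]
  have hlogc : 0 < Real.log c := Real.log_pos hc1
  have hx20 : (0:ℝ) < x - 2 := by linarith
  have hkey : x - 2 ≤ n * Real.log x := by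
    have hd : li x - li 2 = (x - 2) / Real.log c := by
      field_simp at hslope ⊢
      nlinarith [hslope]
    have hdpos : 0 < li x - li 2 := by
      rw [hd]; positivity
    have hlogcx : Real.log c ≤ Real.log x := Real.log_le_log (by linarith) hc.2.le
    have h1 : x - 2 = (li x - li 2) * Real.log c := by
      rw [hd]; field_simp
    rw [h1, hlix]
    have h2 : (n - li 2) * Real.log c ≤ n * Real.log x := by
      have : n - li 2 ≤ n := by linarith [li_two_nonneg]
      nlinarith [li_two_nonneg, hlogc]
    exact h2
  by_contra hcon
  push_neg at hcon
  set X₀ := 2 * n * Real.log n with hX₀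
  -- g strictly monotone on Ioi n
  have hgd : ∀ t ∈ Set.Ioi n, HasDerivAt (fun t => t - 2 - n * Real.log t) (1 - n * t⁻¹) t := by
    intro t ht
    have ht0 : t ≠ 0 := ne_of_gt (lt_trans hn0 (Set.mem_Ioi.mp ht))
    exact ((hasDerivAt_id t).sub_const 2).sub ((Real.hasDerivAt_log ht0).const_mul n)
  have hg : StrictMonoOn (fun t => t - 2 - n * Real.log t) (Set.Ioi n) := by
    apply strictMonoOn_of_deriv_pos (convex_Ioi n)
    · intro t ht
      exact (hgd t ht).continuousAt.continuousWithinAt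
    · intro t ht
      rw [interior_Ioi] at ht
      rw [(hgd t ht).deriv]
      have htpos : 0 < t := lt_trans hn0 ht
      have : n * t⁻¹ < 1 := by
        rw [← div_eq_mul_inv, div_lt_one htpos]
        exact ht
      linarith
  have hXmem : X₀ ∈ Set.Ioi n := hX₀n
  have hxmem : x ∈ Set.Ioi n := Set.mem_Ioi.mpr (lt_trans hX₀n hcon)
  have hmono := hg hXmem hxmem hcon
  -- g X₀ > 0
  have hlogX₀ : Real.log X₀ = Real.log n + Real.log (2 * Real.log n) := by
    rw [hX₀, show 2 * n * Real.log n = n * (2 * Real.log n) by ring,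
      Real.log_mul (ne_of_gt hn0) (by positivity)]
  have h2e : Real.log (2 * Real.log n) ≤ Real.log n - 1 := by
    have hb : 2 * Real.log n ≤ n / Real.exp 1 := by
      rw [le_div_iff₀ (Real.exp_pos 1)]
      calc 2 * Real.log n * Real.exp 1 = 2 * Real.exp 1 * Real.log n := by ring
        _ ≤ n := log_n_large hn
    calc Real.log (2 * Real.log n) ≤ Real.log (n / Real.exp 1) :=
          Real.log_le_log (by positivity) hb
      _ = Real.log n - 1 := by rw [Real.log_div (ne_of_gt hn0) (Real.exp_ne_zero 1), Real.log_exp]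
  have hgX₀ : 0 < X₀ - 2 - n * Real.log X₀ := by
    rw [hlogX₀, hX₀]
    nlinarith
  have hgx : x - 2 - n * Real.log x ≤ 0 := by linarith
  simp only at hmono
  linarith
lemma nth_prime_ge (k : ℕ) : k + 2 ≤ Nat.nth Nat.Prime k := by
  induction k with
  | zero => simpa using (Nat.nth_mem_of_infinite Nat.infinite_setOf_prime 0).two_le
  | succ k ih =>
      have h2 : Nat.nth Nat.Prime k < Nat.nth Nat.Prime (k+1) :=
        Nat.nth_strictMono Nat.infinite_setOf_prime (lt_add_one k)
      omega

lemma primeCounting_nth (k : ℕ) : Nat.primeCounting (Nat.nth Nat.Prime k) = k + 1 := by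
  rw [Nat.primeCounting, Nat.primeCounting', Nat.count_succ]
  have h1 : Nat.count Nat.Prime (Nat.nth Nat.Prime k) = k := Nat.primeCounting'_nth_eq k
  have h2 : Nat.Prime (Nat.nth Nat.Prime k) := Nat.nth_mem_of_infinite Nat.infinite_setOf_prime k
  simp [h1, h2]


set_option maxHeartbeats 2000000 in
theorem sqrt_liInv_sub_sqrt_nthPrime (hRH : RiemannHypothesis)
    (hSchoenfeld : ∀ x : ℝ, 2657 ≤ x →
      |(primePi x : ℝ) - li x| < Real.sqrt x * Real.log x / (8 * Real.pi))
    (n : ℕ) (hn : 2657 ≤ n) :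
    Real.sqrt (liInv n) - Real.sqrt (nthPrime n)
      < Real.sqrt 2 / (16 * Real.pi) * (Real.log (2 * n * Real.log n))^2 := by
  have hπpos : 0 < Real.pi := Real.pi_pos
  have hnR : (2657:ℝ) ≤ (n:ℝ) := by exact_mod_cast hn
  have hn0 : (0:ℝ) < (n:ℝ) := by linarith
  have he3 : Real.exp 1 ≤ 3 := by have := Real.exp_one_lt_d9; linarith
  have hlog1 : 1 ≤ Real.log (n:ℝ) := by rw [Real.le_log_iff_exp_le hn0]; linarith
  set L : ℝ := Real.log (2 * (n:ℝ) * Real.log (n:ℝ)) with hL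
  have hX₀1 : (1:ℝ) < 2 * (n:ℝ) * Real.log (n:ℝ) := by nlinarith
  have hLpos : 0 < L := Real.log_pos hX₀1
  have hs2 : (1:ℝ) ≤ Real.sqrt 2 := by
    rw [show (1:ℝ) = Real.sqrt 1 by rw [Real.sqrt_one]]
    exact Real.sqrt_le_sqrt one_le_two
  have hRHS : 0 < Real.sqrt 2 / (16 * Real.pi) * L^2 := by positivity
  -- the n-th prime
  have hp_ge : 2657 ≤ nthPrime n := by
    have := nth_prime_ge (n - 1)
    unfold nthPrime
    omega
  have hP : (2657:ℝ) ≤ (nthPrime n : ℝ) := by exact_mod_cast hp_ge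
  have hπP : (primePi ((nthPrime n : ℕ) : ℝ) : ℝ) = (n:ℝ) := by
    have h1 : primePi ((nthPrime n : ℕ) : ℝ) = n := by
      show Nat.primeCounting ⌊((nthPrime n : ℕ) : ℝ)⌋₊ = n
      rw [Nat.floor_natCast]
      unfold nthPrime
      rw [primeCounting_nth]
      omega
    rw [h1]
  by_cases hxP : liInv (n:ℝ) ≤ (nthPrime n : ℝ)
  · have : Real.sqrt (liInv (n:ℝ)) ≤ Real.sqrt (nthPrime n : ℝ) := Real.sqrt_le_sqrt hxP
    linarith
  push_neg at hxP
  set x : ℝ := liInv (n:ℝ) with hxdef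
  set P : ℝ := ((nthPrime n : ℕ) : ℝ) with hPdef
  have hP1 : (1:ℝ) < P := by linarith
  have hP0 : (0:ℝ) < P := by linarith
  have hx1 : (1:ℝ) < x := lt_trans hP1 hxP
  have hlix : li x = (n:ℝ) := Function.invFun_eq (li_surj (by linarith))
  have hxle : x ≤ 2 * (n:ℝ) * Real.log (n:ℝ) := li_inv_upper hx1 hnR hlix
  -- MVT between P and x
  obtain ⟨ξ, hξ, hslope⟩ := exists_hasDerivAt_eq_slope li (fun t => 1/Real.log t) hxP
    (li_continuousOn.mono (fun t ht => lt_of_lt_of_le hP1 ht.1))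
    (fun t ht => li_hasDerivAt (lt_trans hP1 ht.1))
  have hξ1 : (1:ℝ) < ξ := lt_trans hP1 hξ.1
  have hlogξ : 0 < Real.log ξ := Real.log_pos hξ1
  have hxP0 : 0 < x - P := by linarith
  have hd : li x - li P = (x - P) / Real.log ξ := by
    field_simp at hslope ⊢
    nlinarith [hslope]
  have hdpos : 0 < (n:ℝ) - li P := by
    rw [← hlix, hd]; positivity
  have hkey : x - P = ((n:ℝ) - li P) * Real.log ξ := by
    rw [← hlix, hd]; field_simp
  -- Schoenfeld at P
  have hSch := hSchoenfeld P hP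
  rw [hπP] at hSch
  have hd_lt : (n:ℝ) - li P < Real.sqrt P * Real.log P / (8 * Real.pi) :=
    lt_of_le_of_lt (le_abs_self _) hSch
  -- log bounds
  have hlogP_pos : 0 < Real.log P := Real.log_pos hP1
  have hlogP_lt : Real.log P < L := Real.log_lt_log hP0 (lt_of_lt_of_le hxP hxle)
  have hlogξ_lt : Real.log ξ < L := Real.log_lt_log (by linarith) (lt_of_lt_of_le hξ.2 hxle)
  -- sqrt difference
  have hsP : 0 < Real.sqrt P := Real.sqrt_pos.mpr hP0
  have hsx : 0 < Real.sqrt x := Real.sqrt_pos.mpr (by linarith)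
  have hsq : (Real.sqrt x - Real.sqrt P) * (Real.sqrt x + Real.sqrt P) = x - P := by
    have h1 : Real.sqrt x ^ 2 = x := Real.sq_sqrt (by linarith)
    have h2 : Real.sqrt P ^ 2 = P := Real.sq_sqrt hP0.le
    have h3 : (Real.sqrt x - Real.sqrt P) * (Real.sqrt x + Real.sqrt P)
        = Real.sqrt x ^ 2 - Real.sqrt P ^ 2 := by ring
    rw [h3, h1, h2]
  have hsPx : Real.sqrt P ≤ Real.sqrt x := Real.sqrt_le_sqrt (by linarith)
  have hstep1 : Real.sqrt x - Real.sqrt P ≤ (x - P) / (2 * Real.sqrt P) := by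
    rw [← hsq, le_div_iff₀ (by positivity : (0:ℝ) < 2 * Real.sqrt P)]
    exact mul_le_mul_of_nonneg_left (by linarith : 2 * Real.sqrt P ≤ Real.sqrt x + Real.sqrt P)
      (by linarith : (0:ℝ) ≤ Real.sqrt x - Real.sqrt P)
  have h1 : x - P < (Real.sqrt P * Real.log P / (8 * Real.pi)) * L := by
    rw [hkey]
    have h2 : ((n:ℝ) - li P) * Real.log ξ ≤ ((n:ℝ) - li P) * L :=
      mul_le_mul_of_nonneg_left hlogξ_lt.le hdpos.le
    have h3 : ((n:ℝ) - li P) * L < (Real.sqrt P * Real.log P / (8 * Real.pi)) * L :=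
      mul_lt_mul_of_pos_right hd_lt hLpos
    linarith
  have h4 : (x - P) / (2 * Real.sqrt P)
      < (Real.sqrt P * Real.log P / (8 * Real.pi)) * L / (2 * Real.sqrt P) :=
    div_lt_div_of_pos_right h1 (by positivity)
  have h5 : (Real.sqrt P * Real.log P / (8 * Real.pi)) * L / (2 * Real.sqrt P)
      = Real.log P * L / (16 * Real.pi) := by
    field_simp
    ring
  have h6 : Real.log P * L / (16 * Real.pi) < L * L / (16 * Real.pi) :=
    div_lt_div_of_pos_right (mul_lt_mul_of_pos_right hlogP_lt hLpos) (by positivity)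
  have h7 : L * L / (16 * Real.pi) ≤ Real.sqrt 2 / (16 * Real.pi) * L^2 := by
    have hLL : 0 ≤ L * L := by positivity
    have : L * L ≤ Real.sqrt 2 * (L * L) := by nlinarith
    rw [pow_two]
    calc L * L / (16 * Real.pi) ≤ Real.sqrt 2 * (L * L) / (16 * Real.pi) := by
          gcongr
      _ = Real.sqrt 2 / (16 * Real.pi) * (L * L) := by ring
  linarith
end
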